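/- Let α ∈ (0,1), T_α = 2/α + 1, and φ ∈ ℤ. For x ∈ ℤ define CI_{α,φ}(x) = ℤ if x = φ, and CI_{α,φ}(x) = {θ ∈ ℤ : |θ − x| < T_α·|x − φ|} if x ≠ φ. Then for every θ ∈ ℤ and every P ∈ 𝒟_θ, P({x ∈ ℤ : θ ∈ CI_{α,φ}(x)}) ≥ 1 − α. Consequently, if φ ≠ 0, then for every θ ∈ ℤ and every P ∈ 𝒟_θ, P({x : θ ∈ CI_{α/2,φ}(x) ∩ CI_{α/2,−φ}(x)}) ≥ 1 − α, and the set CI_{α/2,φ}(x) ∩ CI_{α/2,−φ}(x) is finite for every x ∈ ℤ. -/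

import Mathlib

open MeasureTheory ENNReal

/-- `𝒟_θ`: θ-unimodal probability distributions on `ℤ` (with `θ` a mode). -/
def UnimodalClass (θ : ℤ) : Set (Measure ℤ) :=
  {P | IsProbabilityMeasure P ∧ (∀ n : ℤ, n ≤ θ → P {n - 1} ≤ P {n}) ∧
    (∀ n : ℤ, θ ≤ n → P {n + 1} ≤ P {n})}

/-- The one-observation confidence set `CI_{α,φ}(x)`: all of `ℤ` if `x = φ`, and
`{θ : |θ − x| < (2/α + 1)·|x − φ|}` otherwise. -/
def CI (α : ℝ) (φ : ℤ) (x : ℤ) : Set ℤ :=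
  if x = φ then Set.univ
  else {θ : ℤ | ((|θ - x| : ℤ) : ℝ) < (2 / α + 1) * ((|x - φ| : ℤ) : ℝ)}

lemma mono_up (P : Measure ℤ) (θ : ℤ) (h : ∀ n : ℤ, n ≤ θ → P {n - 1} ≤ P {n})
    (x y : ℤ) (hxy : x ≤ y) (hy : y ≤ θ) : P {x} ≤ P {y} := by
  refine Int.le_induction (motive := fun z _ => z ≤ θ → P {x} ≤ P {z}) ?_ ?_ y hxy hy
  · intro _; exact le_rfl
  · intro n hn ih hn1
    have h1 : P {n + 1 - 1} ≤ P {n + 1} := h (n + 1) hn1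
    have h2 : P {n} ≤ P {n + 1} := by
      have e : n + 1 - 1 = n := by omega
      rwa [e] at h1
    exact le_trans (ih (by omega)) h2

lemma mono_down (P : Measure ℤ) (θ : ℤ) (h : ∀ n : ℤ, θ ≤ n → P {n + 1} ≤ P {n})
    (x y : ℤ) (hxy : y ≤ x) (hy : θ ≤ y) : P {x} ≤ P {y} := by
  refine Int.le_induction (motive := fun z _ => P {z} ≤ P {y}) ?_ ?_ x hxy
  · exact le_rfl
  · intro n hn ih
    exact le_trans (h n (by omega)) ih

lemma point_bound (P : Measure ℤ) [IsProbabilityMeasure P] (θ : ℤ)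
    (hl : ∀ n : ℤ, n ≤ θ → P {n - 1} ≤ P {n}) (hr : ∀ n : ℤ, θ ≤ n → P {n + 1} ≤ P {n})
    (x : ℤ) (k : ℕ) (hk : (k : ℤ) ≤ |θ - x|) : P {x} * ((k : ℝ≥0∞) + 1) ≤ 1 := by
  obtain ⟨S, hcard, hS⟩ : ∃ S : Finset ℤ, S.card = k + 1 ∧ ∀ y ∈ S, P {x} ≤ P {y} := by
    rcases le_total x θ with hxθ | hθx
    · refine ⟨Finset.Icc x (x + k), ?_, ?_⟩
      · rw [Int.card_Icc]; omega
      · intro y hy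
        rw [Finset.mem_Icc] at hy
        have habs : (k : ℤ) ≤ θ - x := by rwa [abs_of_nonneg (by omega)] at hk
        exact mono_up P θ hl x y hy.1 (by omega)
    · refine ⟨Finset.Icc (x - k) x, ?_, ?_⟩
      · rw [Int.card_Icc]; omega
      · intro y hy
        rw [Finset.mem_Icc] at hy
        have habs : (k : ℤ) ≤ x - θ := by
          rw [abs_of_nonpos (by omega)] at hk; omega
        exact mono_down P θ hr x y hy.2 (by omega)
  have hsum : ∑ y ∈ S, P {y} ≤ 1 := by
    have := sum_measure_le_measure_univ (μ := P) (s := S) (t := fun y => ({y} : Set ℤ))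
      (fun i _ => (MeasurableSet.of_discrete).nullMeasurableSet)
      (fun i _ j _ hij => (Disjoint.aedisjoint (by simp [hij])))
    simpa using this
  calc P {x} * ((k : ℝ≥0∞) + 1) = ∑ _y ∈ S, P {x} := by
        rw [Finset.sum_const, hcard, nsmul_eq_mul]
        push_cast
        ring
    _ ≤ ∑ y ∈ S, P {y} := Finset.sum_le_sum hS
    _ ≤ 1 := hsum

lemma measure_le_sum_finset (P : Measure ℤ) (S : Finset ℤ) :
    P ↑S ≤ ∑ x ∈ S, P {x} := by
  have h : (↑S : Set ℤ) = ⋃ x ∈ S, {x} := by ext y; simp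
  rw [h]
  exact measure_biUnion_finset_le S _

/-- Main bound: the probability that `θ` is NOT covered is at most `α`. -/
lemma bad_bound (α : ℝ) (hα0 : 0 < α) (hα1 : α < 1) (φ θ : ℤ) (P : Measure ℤ)
    (hP : P ∈ UnimodalClass θ) : P {x : ℤ | θ ∉ CI α φ x} ≤ ENNReal.ofReal α := by
  obtain ⟨hprob, hl, hr⟩ := hP
  have hT2 : (0:ℝ) < 2 / α := by positivity
  set T : ℝ := 2 / α + 1 with hT
  have hT1 : 1 < T := by rw [hT]; linarith
  have hT0 : (0:ℝ) < T := by linarith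
  have hbad : ∀ x : ℤ, θ ∉ CI α φ x →
      x ≠ φ ∧ T * ((|x - φ| : ℤ) : ℝ) ≤ ((|θ - x| : ℤ) : ℝ) := by
    intro x hx
    by_cases hxφ : x = φ
    · exact absurd (by simp [CI, hxφ]) hx
    · refine ⟨hxφ, ?_⟩
      rw [CI, if_neg hxφ] at hx
      simp only [Set.mem_setOf_eq, not_lt] at hx
      rw [hT]
      linarith
  by_cases hθφ : θ = φ
  · have hempty : {x : ℤ | θ ∉ CI α φ x} = ∅ := by
      ext x
      simp only [Set.mem_setOf_eq, Set.mem_empty_iff_false, iff_false, not_not]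
      by_contra hx
      obtain ⟨hne, hineq⟩ := hbad x hx
      have h1 : (1:ℤ) ≤ |x - φ| := abs_pos.mpr (sub_ne_zero.mpr hne)
      have h1' : (1:ℝ) ≤ ((|x - φ| : ℤ) : ℝ) := by exact_mod_cast h1
      have heq : |θ - x| = |x - φ| := by rw [hθφ, abs_sub_comm]
      rw [heq] at hineq
      nlinarith
    rw [hempty]
    simp
  · -- main case
    set d : ℤ := |θ - φ| with hd
    have hd1 : 1 ≤ d := by
      have h := abs_pos.mpr (sub_ne_zero.mpr hθφ)
      rw [← hd] at h
      linarith
    have hD1 : (1:ℝ) ≤ (d:ℝ) := by exact_mod_cast hd1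
    set u : ℤ := ⌊(d : ℝ) * α / 2⌋ with hu
    set w : ℤ := ⌈(d : ℝ) * T / (T + 1)⌉ with hw
    have hTpos : (0:ℝ) < T + 1 := by linarith
    have hu0 : 0 ≤ u := Int.floor_nonneg.mpr (by positivity)
    have huD : (u:ℝ) ≤ (d:ℝ) * α / 2 := Int.floor_le _
    have hwD : (d:ℝ) * T / (T + 1) ≤ (w:ℝ) := Int.le_ceil _
    have hw1 : 0 < w := Int.ceil_pos.mpr (by positivity)
    have hwd : w ≤ d := by
      apply Int.ceil_le.mpr
      rw [div_le_iff₀ hTpos]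
      nlinarith
    have hud : u < d := by
      have hlt : (u:ℝ) < (d:ℝ) := by nlinarith
      exact_mod_cast hlt
    have hufl : ∀ m : ℤ, (m:ℝ) ≤ (d:ℝ) * α / 2 → m ≤ u := fun m hm => Int.le_floor.mpr hm
    have hwce : ∀ m : ℤ, (d:ℝ) * T / (T + 1) ≤ (m:ℝ) → w ≤ m := fun m hm => Int.ceil_le.mpr hm
    -- key real inequality
    have hkey : ((d : ℝ) + (u : ℝ) - (w : ℝ)) ≤ α * ((w : ℝ) + 1) := by
      have e1 : (1 + α) * ((d:ℝ) * T / (T + 1)) = (d:ℝ) * (1 + α / 2) := by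
        rw [hT]
        field_simp
        ring
      have e2 : (1 + α) * ((d:ℝ) * T / (T + 1)) ≤ (1 + α) * (w:ℝ) :=
        mul_le_mul_of_nonneg_left hwD (by linarith)
      nlinarith
    clear_value d u w
    have hbad2 : ∀ x : ℤ, θ ∉ CI α φ x →
        x ≠ φ ∧ φ - u ≤ x ∧ x ≤ φ + u ∧ w ≤ |θ - x| := by
      intro x hx
      obtain ⟨hne, hineq⟩ := hbad x hx
      have htri1 : |θ - x| ≤ d + |x - φ| := by
        have h1 := abs_sub_le θ φ x
        have h2 := abs_sub_comm φ x
        linarith [hd]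
      have htri2 : d ≤ |θ - x| + |x - φ| := by
        have h1 := abs_sub_le θ x φ
        linarith [hd]
      have hm0 : (0:ℤ) ≤ |x - φ| := abs_nonneg _
      have htri1' : ((|θ - x| : ℤ) : ℝ) ≤ (d:ℝ) + ((|x - φ| : ℤ) : ℝ) := by exact_mod_cast htri1
      have htri2' : (d:ℝ) ≤ ((|θ - x| : ℤ) : ℝ) + ((|x - φ| : ℤ) : ℝ) := by exact_mod_cast htri2
      have hm0' : (0:ℝ) ≤ ((|x - φ| : ℤ) : ℝ) := by exact_mod_cast hm0
      have ha : |x - φ| ≤ u := by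
        apply hufl
        rw [hT] at hineq
        have h2 : 2 * ((|x - φ| : ℤ) : ℝ) ≤ (d : ℝ) * α := by
          have h3 : (2 / α) * ((|x - φ| : ℤ) : ℝ) ≤ (d : ℝ) := by nlinarith
          have h4 := mul_le_mul_of_nonneg_right h3 hα0.le
          rw [div_mul_eq_mul_div, div_mul_eq_mul_div, mul_div_assoc,
            div_self (ne_of_gt hα0), mul_one] at h4
          linarith
        linarith
      have hb : w ≤ |θ - x| := by
        apply hwce
        rw [div_le_iff₀ hTpos]
        nlinarith
      have ha' := abs_le.mp ha
      exact ⟨hne, by omega, by omega, hb⟩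
    classical
    set S : Finset ℤ :=
      ((Finset.Icc (φ - u) (φ + u)).erase φ).filter (fun x => w ≤ |θ - x|) with hS
    have hsub : {x : ℤ | θ ∉ CI α φ x} ⊆ ↑S := by
      intro x hx
      obtain ⟨h1, h2, h3, h4⟩ := hbad2 x hx
      simp only [hS, Finset.coe_filter, Finset.mem_erase, Finset.mem_Icc, Set.mem_setOf_eq]
      exact ⟨⟨h1, h2, h3⟩, h4⟩
    have hcard : (S.card : ℤ) ≤ d + u - w := by
      rcases lt_or_gt_of_ne hθφ with hlt | hgt
      · -- θ < φ, d = φ - θ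
        have hd' : d = φ - θ := by
          rw [hd, abs_of_nonpos (by linarith)]; ring
        have hsub2 : S ⊆ (Finset.Icc (θ + w) (φ + u)).erase φ := by
          intro x hx
          simp only [hS, Finset.mem_filter, Finset.mem_erase, Finset.mem_Icc] at hx ⊢
          obtain ⟨⟨hxne, hx1, hx2⟩, hx3⟩ := hx
          rcases le_abs.mp hx3 with h | h
          · refine ⟨hxne, by omega, by omega⟩
          · refine ⟨hxne, by omega, by omega⟩
        have hφmem : φ ∈ Finset.Icc (θ + w) (φ + u) := by
          rw [Finset.mem_Icc]; omega
        have hcc := Finset.card_le_card hsub2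
        rw [Finset.card_erase_of_mem hφmem, Int.card_Icc] at hcc
        omega
      · -- θ > φ, d = θ - φ
        have hd' : d = θ - φ := by
          rw [hd, abs_of_nonneg (by linarith)]
        have hsub2 : S ⊆ (Finset.Icc (φ - u) (θ - w)).erase φ := by
          intro x hx
          simp only [hS, Finset.mem_filter, Finset.mem_erase, Finset.mem_Icc] at hx ⊢
          obtain ⟨⟨hxne, hx1, hx2⟩, hx3⟩ := hx
          rcases le_abs.mp hx3 with h | h
          · refine ⟨hxne, by omega, by omega⟩
          · refine ⟨hxne, by omega, by omega⟩
        have hφmem : φ ∈ Finset.Icc (φ - u) (θ - w) := by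
          rw [Finset.mem_Icc]; omega
        have hcc := Finset.card_le_card hsub2
        rw [Finset.card_erase_of_mem hφmem, Int.card_Icc] at hcc
        omega
    -- finish
    set W : ℕ := w.toNat with hW
    have hWw : (W : ℤ) = w := Int.toNat_of_nonneg (by omega)
    have hpt : ∀ x ∈ S, P {x} ≤ ((W : ℝ≥0∞) + 1)⁻¹ := by
      intro x hx
      simp only [hS, Finset.mem_filter] at hx
      have hk : (W : ℤ) ≤ |θ - x| := by rw [hWw]; exact hx.2
      have hpb := point_bound P θ hl hr x W hk
      rw [ENNReal.le_inv_iff_mul_le]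
      exact hpb
    have hb0 : ((W : ℝ≥0∞) + 1) ≠ 0 :=
      ne_of_gt (lt_of_lt_of_le zero_lt_one le_add_self)
    have hbtop : ((W : ℝ≥0∞) + 1) ≠ ⊤ :=
      ENNReal.add_ne_top.mpr ⟨ENNReal.natCast_ne_top W, ENNReal.one_ne_top⟩
    calc P {x : ℤ | θ ∉ CI α φ x} ≤ P ↑S := measure_mono hsub
      _ ≤ ∑ x ∈ S, P {x} := measure_le_sum_finset P S
      _ ≤ ∑ _x ∈ S, ((W : ℝ≥0∞) + 1)⁻¹ := Finset.sum_le_sum hpt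
      _ = (S.card : ℝ≥0∞) * ((W : ℝ≥0∞) + 1)⁻¹ := by
          rw [Finset.sum_const, nsmul_eq_mul]
      _ ≤ ENNReal.ofReal α := by
          rw [ENNReal.mul_inv_le_iff hb0 hbtop]
          have hle : ((S.card : ℕ) : ℝ) ≤ α * ((W : ℝ) + 1) := by
            have h1 : ((S.card : ℤ) : ℝ) ≤ (d:ℝ) + (u:ℝ) - (w:ℝ) := by
              push_cast
              exact_mod_cast hcard
            have h2 : ((W : ℕ) : ℝ) = ((w : ℤ) : ℝ) := by exact_mod_cast hWw
            rw [h2]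
            push_cast at h1 ⊢
            linarith
          calc ((S.card : ℕ) : ℝ≥0∞) = ENNReal.ofReal ((S.card : ℕ) : ℝ) := by
                rw [ENNReal.ofReal_natCast]
            _ ≤ ENNReal.ofReal (α * ((W : ℝ) + 1)) := ENNReal.ofReal_le_ofReal hle
            _ = ENNReal.ofReal α * ENNReal.ofReal ((W : ℝ) + 1) :=
                ENNReal.ofReal_mul hα0.le
            _ = ENNReal.ofReal α * ((W : ℝ≥0∞) + 1) := by
                rw [ENNReal.ofReal_add (by positivity) zero_le_one]
                simp [ENNReal.ofReal_natCast]

lemma good_of_bad (α : ℝ) (hα0 : 0 ≤ α) (hα1 : α ≤ 1) (P : Measure ℤ)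
    [IsProbabilityMeasure P] (A : Set ℤ) (h : P Aᶜ ≤ ENNReal.ofReal α) :
    ENNReal.ofReal (1 - α) ≤ P A := by
  have hc : P Aᶜ = 1 - P A := prob_compl_eq_one_sub (MeasurableSet.of_discrete)
  have h1 : (1 : ℝ≥0∞) ≤ ENNReal.ofReal α + P A := by
    rw [hc] at h
    have := tsub_le_iff_right.mp h
    exact this
  have h2 : ENNReal.ofReal (1 - α) + ENNReal.ofReal α = 1 := by
    rw [← ENNReal.ofReal_add (by linarith) hα0]
    norm_num
  calc ENNReal.ofReal (1 - α) = 1 - ENNReal.ofReal α := by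
        rw [← h2]
        rw [ENNReal.add_sub_cancel_right ENNReal.ofReal_ne_top]
    _ ≤ P A := tsub_le_iff_right.mpr (by rwa [add_comm] at h1)

lemma ci_finite (β : ℝ) (ψ x : ℤ) (hx : x ≠ ψ) : (CI β ψ x).Finite := by
  rw [CI, if_neg hx]
  set C : ℝ := (2 / β + 1) * ((|x - ψ| : ℤ) : ℝ) with hC
  apply Set.Finite.subset (Set.finite_Icc (x - ⌈C⌉) (x + ⌈C⌉))
  intro θ hθ
  simp only [Set.mem_setOf_eq] at hθ
  have h1 : ((|θ - x| : ℤ) : ℝ) < ((⌈C⌉ : ℤ) : ℝ) := lt_of_lt_of_le hθ (Int.le_ceil C)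
  have h2 : |θ - x| < ⌈C⌉ := by exact_mod_cast h1
  have h3 := abs_lt.mp h2
  simp only [Set.mem_Icc]
  omega

theorem stmt13 (α : ℝ) (hα0 : 0 < α) (hα1 : α < 1) (φ : ℤ) :
    (∀ θ : ℤ, ∀ P ∈ UnimodalClass θ,
      ENNReal.ofReal (1 - α) ≤ P {x : ℤ | θ ∈ CI α φ x}) ∧
    (φ ≠ 0 →
      (∀ θ : ℤ, ∀ P ∈ UnimodalClass θ,
        ENNReal.ofReal (1 - α) ≤ P {x : ℤ | θ ∈ CI (α / 2) φ x ∩ CI (α / 2) (-φ) x}) ∧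
      ∀ x : ℤ, (CI (α / 2) φ x ∩ CI (α / 2) (-φ) x).Finite) := by
  constructor
  · intro θ P hP
    haveI := hP.1
    apply good_of_bad α hα0.le hα1.le
    have he : {x : ℤ | θ ∈ CI α φ x}ᶜ = {x : ℤ | θ ∉ CI α φ x} := by
      ext x; simp
    rw [he]
    exact bad_bound α hα0 hα1 φ θ P hP
  · intro hφ
    constructor
    · intro θ P hP
      haveI := hP.1
      apply good_of_bad α hα0.le hα1.le
      have hsub : {x : ℤ | θ ∈ CI (α / 2) φ x ∩ CI (α / 2) (-φ) x}ᶜ ⊆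
          {x : ℤ | θ ∉ CI (α / 2) φ x} ∪ {x : ℤ | θ ∉ CI (α / 2) (-φ) x} := by
        intro x hx
        simp only [Set.mem_compl_iff, Set.mem_setOf_eq, Set.mem_inter_iff,
          Set.mem_union, not_and_or] at hx ⊢
        exact hx
      have hhalf0 : (0:ℝ) < α / 2 := by linarith
      have hhalf1 : α / 2 < 1 := by linarith
      calc P {x : ℤ | θ ∈ CI (α / 2) φ x ∩ CI (α / 2) (-φ) x}ᶜ
          ≤ P ({x : ℤ | θ ∉ CI (α / 2) φ x} ∪ {x : ℤ | θ ∉ CI (α / 2) (-φ) x}) :=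
            measure_mono hsub
        _ ≤ P {x : ℤ | θ ∉ CI (α / 2) φ x} + P {x : ℤ | θ ∉ CI (α / 2) (-φ) x} :=
            measure_union_le _ _
        _ ≤ ENNReal.ofReal (α / 2) + ENNReal.ofReal (α / 2) :=
            add_le_add (bad_bound (α / 2) hhalf0 hhalf1 φ θ P hP)
              (bad_bound (α / 2) hhalf0 hhalf1 (-φ) θ P hP)
        _ = ENNReal.ofReal α := by
            rw [← ENNReal.ofReal_add (by linarith) (by linarith)]
            norm_num
    · intro x
      by_cases hxφ : x = φ
      · have hx2 : x ≠ -φ := by omega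
        exact Set.Finite.subset (ci_finite (α / 2) (-φ) x hx2) Set.inter_subset_right
      · exact Set.Finite.subset (ci_finite (α / 2) φ x hxφ) Set.inter_subset_left
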